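/- Let X and Z be independent random variables on a probability space with values in measurable spaces E and F respectively, and let Z' be a random variable with the same distribution as Z such that X, Z and Z' are mutually independent. Let f : E × F → ℝ be measurable with f(X,Z) square-integrable. Setting Y = f(X,Z) and Y^X = f(X,Z'), one has Var(E[Y | X]) = Cov(Y, Y^X). -/

import Mathlib

open MeasureTheory ProbabilityTheory
open scoped ENNReal NNReal

lemma pf_variance_congr_ae {Ω : Type*} {_ : MeasurableSpace Ω} {X Y : Ω → ℝ} {μ : Measure Ω}
    (h : X =ᵐ[μ] Y) : variance X μ = variance Y μ := by
  have hi : μ[X] = μ[Y] := integral_congr_ae h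
  unfold ProbabilityTheory.variance ProbabilityTheory.evariance
  rw [hi]
  congr 1
  exact lintegral_congr_ae (h.mono fun ω hω => by simp only [hω])

/-- **Pick-and-Freeze identity.** Let `X` and `Z` be independent random variables with values
in measurable spaces `E` and `F`, and let `Z'` have the same distribution as `Z`, with
`X, Z, Z'` mutually independent (encoded as: `X ⟂ Z` and `(X, Z) ⟂ Z'`).  For a measurable
`f : E × F → ℝ` with `Y = f(X,Z)` square-integrable, one has
`Var(E[Y | X]) = Cov(Y, Yˣ)` where `Yˣ = f(X, Z')` and
`Cov(U,V) = E[UV] − E[U]·E[V]`. -/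
theorem pick_and_freeze
    {Ω E F : Type*} [MeasurableSpace Ω] [MeasurableSpace E] [MeasurableSpace F]
    (μ : Measure Ω) [IsProbabilityMeasure μ]
    (X : Ω → E) (Z Z' : Ω → F)
    (hX : Measurable X) (hZ : Measurable Z) (hZ' : Measurable Z')
    (hlaw : Measure.map Z' μ = Measure.map Z μ)
    (hXZ : IndepFun X Z μ)
    (hXZ_Z' : IndepFun (fun ω => (X ω, Z ω)) Z' μ)
    (f : E × F → ℝ) (hf : Measurable f)
    (hY2 : MemLp (fun ω => f (X ω, Z ω)) 2 μ) :
    variance (μ[(fun ω => f (X ω, Z ω)) | MeasurableSpace.comap X inferInstance]) μ =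
      (∫ ω, f (X ω, Z ω) * f (X ω, Z' ω) ∂μ)
        - (∫ ω, f (X ω, Z ω) ∂μ) * (∫ ω, f (X ω, Z' ω) ∂μ) := by
  have hm := hX.comap_le
  set ν : Measure F := μ.map Z with hν_def
  set μX : Measure E := μ.map X with hμX_def
  set π : Measure (E × F) := μX.prod ν with hπ_def
  have hνprob : IsProbabilityMeasure ν := Measure.isProbabilityMeasure_map hZ.aemeasurable
  have hμXprob : IsProbabilityMeasure μX := Measure.isProbabilityMeasure_map hX.aemeasurable
  have hXZmeas : Measurable fun ω => (X ω, Z ω) := hX.prodMk hZ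
  have hXZ'meas : Measurable fun ω => (X ω, Z' ω) := hX.prodMk hZ'
  have h1 : μ.map (fun ω => (X ω, Z ω)) = π :=
    (indepFun_iff_map_prod_eq_prod_map_map hX.aemeasurable hZ.aemeasurable).mp hXZ
  have hXZ' : IndepFun X Z' μ := hXZ_Z'.comp measurable_fst measurable_id
  have h3 : μ.map (fun ω => (X ω, Z' ω)) = π := by
    rw [(indepFun_iff_map_prod_eq_prod_map_map hX.aemeasurable hZ'.aemeasurable).mp hXZ', hlaw]
  -- f is in L² of π
  have hfae : AEStronglyMeasurable f π := hf.aestronglyMeasurable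
  have hfL2 : MemLp f 2 π := by
    have := (memLp_map_measure_iff (f := fun ω => (X ω, Z ω))
      hf.aestronglyMeasurable hXZmeas.aemeasurable).mpr hY2
    rwa [h1] at this
  have hfInt : Integrable f π := hfL2.integrable one_le_two
  set g : E → ℝ := fun x => ∫ z, f (x, z) ∂ν with hg_def
  have hg_sm : StronglyMeasurable g := hf.stronglyMeasurable.integral_prod_right'
  have hgInt : Integrable g μX := hfInt.integral_prod_left
  have hYint : Integrable (fun ω => f (X ω, Z ω)) μ := hY2.integrable one_le_two
  have hgX_int : Integrable (fun ω => g (X ω)) μ :=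
    (integrable_map_measure hg_sm.aestronglyMeasurable hX.aemeasurable).mp hgInt
  -- Step A : conditional expectation is g ∘ X
  have hset : ∀ s, MeasurableSet[MeasurableSpace.comap X inferInstance] s → μ s < ⊤ →
      ∫ ω in s, g (X ω) ∂μ = ∫ ω in s, f (X ω, Z ω) ∂μ := by
    rintro s ⟨A, hA, rfl⟩ -
    have hpre : (fun ω => (X ω, Z ω)) ⁻¹' (A ×ˢ Set.univ) = X ⁻¹' A := by
      ext ω; simp
    have hres : π.restrict (A ×ˢ Set.univ) = (μX.restrict A).prod ν := by
      rw [← Measure.prod_restrict, Measure.restrict_univ]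
    have hfIntA : Integrable f ((μX.restrict A).prod ν) := by
      rw [← hres]; exact hfInt.restrict
    have e1 : ∫ ω in X ⁻¹' A, f (X ω, Z ω) ∂μ = ∫ p in A ×ˢ Set.univ, f p ∂π := by
      rw [← h1, setIntegral_map (hA.prod MeasurableSet.univ) hf.aestronglyMeasurable
        hXZmeas.aemeasurable, hpre]
    have e2 : ∫ p in A ×ˢ Set.univ, f p ∂π = ∫ x in A, g x ∂μX := by
      rw [show (∫ p in A ×ˢ Set.univ, f p ∂π) = ∫ p, f p ∂((μX.restrict A).prod ν) by
        rw [← hres]]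
      exact integral_prod f hfIntA
    have e3 : ∫ ω in X ⁻¹' A, g (X ω) ∂μ = ∫ x in A, g x ∂μX := by
      rw [setIntegral_map hA hg_sm.aestronglyMeasurable hX.aemeasurable]
    rw [e1, e2, e3]
  have hgm' : AEStronglyMeasurable[MeasurableSpace.comap X inferInstance]
      (fun ω => g (X ω)) μ := by
    have hXm : Measurable[MeasurableSpace.comap X inferInstance] X :=
      Measurable.of_comap_le le_rfl
    exact (hg_sm.comp_measurable hXm).aestronglyMeasurable
  have hce : (fun ω => g (X ω)) =ᵐ[μ]
      μ[(fun ω => f (X ω, Z ω)) | MeasurableSpace.comap X inferInstance] :=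
    ae_eq_condExp_of_forall_setIntegral_eq hm hYint
      (fun s _ _ => hgX_int.integrableOn) hset hgm'
  -- g is in L² of μX
  have hsqInt : Integrable (fun p => f p ^ 2) π := hfL2.integrable_sq
  have hk : Integrable (fun x => ∫ z, f (x, z) ^ 2 ∂ν) μX := hsqInt.integral_prod_left
  have hae1 : ∀ᵐ x ∂μX, Integrable (fun z => f (x, z)) ν := hfInt.prod_right_ae
  have hae2 : ∀ᵐ x ∂μX, Integrable (fun z => f (x, z) ^ 2) ν := hsqInt.prod_right_ae
  have hg2int : Integrable (fun x => g x ^ 2) μX := by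
    refine Integrable.mono' hk (hg_sm.pow 2).aestronglyMeasurable ?_
    filter_upwards [hae1, hae2] with x hx1 hx2
    rw [Real.norm_eq_abs, abs_of_nonneg (sq_nonneg _)]
    have hmem : MemLp (fun z => f (x, z)) 2 ν :=
      (memLp_two_iff_integrable_sq (hf.comp measurable_prodMk_left).aestronglyMeasurable).mpr hx2
    have hv := variance_nonneg (fun z => f (x, z)) ν
    rw [variance_eq_sub hmem] at hv
    simp only [Pi.pow_apply] at hv
    have : g x = ∫ z, f (x, z) ∂ν := rfl
    rw [this]
    linarith
  have hg2 : MemLp g 2 μX :=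
    (memLp_two_iff_integrable_sq hg_sm.aestronglyMeasurable).mpr hg2int
  have hgX2 : MemLp (fun ω => g (X ω)) 2 μ :=
    (memLp_map_measure_iff hg_sm.aestronglyMeasurable hX.aemeasurable).mp hg2
  -- Yˣ is in L²
  have hYx2 : MemLp (fun ω => f (X ω, Z' ω)) 2 μ := by
    have := (memLp_map_measure_iff (f := fun ω => (X ω, Z' ω))
      hf.aestronglyMeasurable hXZ'meas.aemeasurable).mp (by rwa [h3])
    exact this
  -- expectations
  have hEY : ∫ ω, f (X ω, Z ω) ∂μ = ∫ x, g x ∂μX := by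
    rw [← integral_map hXZmeas.aemeasurable hf.aestronglyMeasurable, h1]
    exact integral_prod f hfInt
  have hEYx : ∫ ω, f (X ω, Z' ω) ∂μ = ∫ x, g x ∂μX := by
    rw [← integral_map hXZ'meas.aemeasurable hf.aestronglyMeasurable, h3]
    exact integral_prod f hfInt
  -- the product term
  have hbig_meas : Measurable fun ω => ((X ω, Z ω), Z' ω) := hXZmeas.prodMk hZ'
  have h2 : μ.map (fun ω => ((X ω, Z ω), Z' ω)) = π.prod ν := by
    rw [(indepFun_iff_map_prod_eq_prod_map_map hXZmeas.aemeasurable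
      hZ'.aemeasurable).mp hXZ_Z', h1, hlaw]
  set H : (E × F) × F → ℝ := fun q => f q.1 * f (q.1.1, q.2) with hH_def
  have hH_meas : Measurable H :=
    (hf.comp measurable_fst).mul
      (hf.comp ((measurable_fst.comp measurable_fst).prodMk measurable_snd))
  have h11 : (1 : ℝ≥0∞) / 1 = 1 / 2 + 1 / 2 := by
    rw [ENNReal.add_halves]; exact one_div_one
  have hYYx_int : Integrable (fun ω => f (X ω, Z ω) * f (X ω, Z' ω)) μ := by
    have h := (hYx2.smul (r := 1) hY2).integrable le_rfl
    simpa [smul_eq_mul, Pi.mul_def] using h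
  have hHint : Integrable H (π.prod ν) := by
    rw [← h2]
    exact (integrable_map_measure hH_meas.aestronglyMeasurable
      hbig_meas.aemeasurable).mpr hYYx_int
  have hgfst : MemLp (fun p : E × F => g p.1) 2 π := by
    have hmapfst : π.map Prod.fst = μX := by
      rw [Measure.map_fst_prod]; simp
    exact (memLp_map_measure_iff hg_sm.aestronglyMeasurable
      measurable_fst.aemeasurable).mp (by rwa [hmapfst])
  have hfg_int : Integrable (fun p => f p * g p.1) π := by
    have h := (hgfst.smul (r := 1) hfL2).integrable le_rfl
    simpa [smul_eq_mul, Pi.mul_def] using h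
  have hprod : ∫ ω, f (X ω, Z ω) * f (X ω, Z' ω) ∂μ = ∫ x, g x * g x ∂μX := by
    have e1 : ∫ ω, f (X ω, Z ω) * f (X ω, Z' ω) ∂μ = ∫ q, H q ∂(π.prod ν) := by
      rw [← h2, integral_map hbig_meas.aemeasurable hH_meas.aestronglyMeasurable]
    rw [e1, integral_prod _ hHint]
    have e2 : ∀ p : E × F, (∫ z', H (p, z') ∂ν) = f p * g p.1 := fun p =>
      integral_const_mul (f p) fun z' => f (p.1, z')
    simp_rw [e2]
    rw [integral_prod _ hfg_int]
    congr 1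
    ext x
    simp_rw [integral_mul_const]
    rfl
  -- put everything together
  have hvar : variance (μ[(fun ω => f (X ω, Z ω)) | MeasurableSpace.comap X inferInstance]) μ
      = variance (fun ω => g (X ω)) μ := pf_variance_congr_ae hce.symm
  rw [hvar, variance_eq_sub hgX2, hEY, hEYx, hprod]
  have hsq : ∫ ω, g (X ω) ^ 2 ∂μ = ∫ x, g x ^ 2 ∂μX :=
    (integral_map hX.aemeasurable hg2int.aestronglyMeasurable).symm
  have hmean : ∫ ω, g (X ω) ∂μ = ∫ x, g x ∂μX :=
    (integral_map hX.aemeasurable hg_sm.aestronglyMeasurable).symm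
  simp only [Pi.pow_apply]
  rw [show (∫ ω, g (X ω) ^ 2 ∂μ) = ∫ x, g x ^ 2 ∂μX from hsq, hmean]
  have : ∫ x, g x * g x ∂μX = ∫ x, g x ^ 2 ∂μX := by
    congr 1; ext x; ring
  rw [this]
  ring
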